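/- Let d ≥ 1 and work in EuclideanSpace ℝ (Fin d) with standard basis vectors e_i = EuclideanSpace.single i 1. Set α = (1 − √(d+1))/d and define d+1 points w : Fin (d+1) → EuclideanSpace ℝ (Fin d) by w i = e_i for i < d and w_d = α • (Σ_{i : Fin d} e_i). Then the points are mutually equidistant: for all i ≠ j, dist (w i) (w j) = √2. -/

import Mathlib

/-- The `d+1` vertices of the regular `d`-simplex construction (the `d`
standard basis vectors together with `α • ∑ i, e i`, `α = (1 - √(d+1))/d`)
are mutually equidistant, at distance `√2`. -/
theorem simplex_vertices_equidistant (d : ℕ) (hd : 1 ≤ d)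
    (e : Fin d → EuclideanSpace ℝ (Fin d))
    (he : ∀ i, e i = EuclideanSpace.single i 1)
    (α : ℝ) (hα : α = (1 - Real.sqrt (d + 1)) / d)
    (w : Fin (d + 1) → EuclideanSpace ℝ (Fin d))
    (hw : ∀ i : Fin (d + 1),
      w i = if h : (i : ℕ) < d then e ⟨i, h⟩ else α • ∑ j : Fin d, e j) :
    ∀ i j : Fin (d + 1), i ≠ j → dist (w i) (w j) = Real.sqrt 2 := by
  have hd0 : (d : ℝ) ≠ 0 := by positivity
  have hs : Real.sqrt (d + 1) ^ 2 = d + 1 := Real.sq_sqrt (by positivity)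
  -- distance between two basis vectors
  have hA : ∀ i j : Fin d, i ≠ j → dist (e i) (e j) = Real.sqrt 2 := by
    intro i j hij
    rw [he, he, EuclideanSpace.dist_eq]
    congr 1
    have : ∀ k : Fin d, dist (EuclideanSpace.single i (1:ℝ) k)
        (EuclideanSpace.single j (1:ℝ) k) ^ 2
        = (if k = i then (1:ℝ) else 0) + (if k = j then 1 else 0) := by
      intro k
      simp only [EuclideanSpace.single_apply, Real.dist_eq]
      rcases eq_or_ne k i with rfl | hki <;> rcases eq_or_ne k j with rfl | hkj
      · exact absurd rfl hij
      all_goals simp_all; try norm_num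
    rw [Finset.sum_congr rfl fun k _ => this k, Finset.sum_add_distrib]
    simp
    norm_num
  -- distance from a basis vector to the apex
  have hB : ∀ i : Fin d, dist (e i) (α • ∑ j : Fin d, e j) = Real.sqrt 2 := by
    intro i
    rw [EuclideanSpace.dist_eq]
    congr 1
    have hsum : ∀ k : Fin d, (α • ∑ j : Fin d, e j) k = α := by
      intro k
      simp only [PiLp.smul_apply, smul_eq_mul]
      have : (∑ j : Fin d, e j) k = ∑ j : Fin d, (EuclideanSpace.single j (1:ℝ)) k := by
        rw [show (∑ j : Fin d, e j) k = ∑ j : Fin d, e j k from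
          by rw [WithLp.ofLp_sum]; exact Finset.sum_apply k Finset.univ fun j => (e j).ofLp]
        exact Finset.sum_congr rfl fun j _ => by rw [he]
      rw [this]
      simp [EuclideanSpace.single_apply]
    have : ∀ k : Fin d, dist (e i k) ((α • ∑ j : Fin d, e j) k) ^ 2
        = if k = i then (1 - α)^2 else α^2 := by
      intro k
      rw [hsum, he]
      simp only [EuclideanSpace.single_apply, Real.dist_eq]
      rcases eq_or_ne k i with rfl | hki
      · simp only [if_pos rfl, if_true]
        rw [abs_sub_comm, sq_abs]
        ring
      · simp [hki, sq_abs]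
    rw [Finset.sum_congr rfl fun k _ => this k, Finset.sum_ite, Finset.sum_const,
      Finset.sum_const]
    have h1 : (Finset.univ.filter (fun k : Fin d => k = i)).card = 1 := by
      simp [Finset.filter_eq']
    have h2 : (Finset.univ.filter (fun k : Fin d => ¬ k = i)).card = d - 1 := by
      rw [Finset.filter_not, Finset.card_sdiff_of_subset (Finset.subset_univ _)]
      simp [Finset.filter_eq']
    rw [h1, h2]
    have hdc : ((d - 1 : ℕ) : ℝ) = (d : ℝ) - 1 := by
      have : (1:ℕ) ≤ d := hd
      push_cast [this]
      ring
    rw [nsmul_eq_mul, nsmul_eq_mul, hdc, hα]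
    field_simp
    push_cast
    nlinarith [hs]
  intro i j hij
  rw [hw i, hw j]
  split_ifs with h1 h2 h2
  · exact hA _ _ (by simpa [Fin.ext_iff] using hij)
  · exact hB _
  · rw [dist_comm]; exact hB _
  · exfalso; apply hij; have := i.isLt; have := j.isLt; omega
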